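/- Let n ≥ 1, let τ > 0, let ρ : [0,τ] → Mₙ(ℂ) be a continuously differentiable family of positive definite density matrices with derivative ρ̇ₜ, let F be a nonempty compact set of positive definite density matrices on ℂⁿ, define M(ϱ) := min_{σ∈F} S(ϱ‖σ), and let σ₀^▼ ∈ F attain this minimum for ρ₀. Set ΔM := M(ρ_τ) − M(ρ₀) and ΔS := S(ρ_τ) − S(ρ₀). If ΔM + ΔS ≥ 0, then |ΔM + ΔS| ≤ ∫₀^τ |Tr[ρ̇ₜ · log σ₀^▼]| dt; equivalently τ ≥ T̃_M(ρ₀,ρ_τ) := |ΔM + ΔS| / ⟨|Tr[ρ̇ₜ log σ₀^▼]|⟩ₜ, where ⟨f⟩ₜ := (1/τ)∫₀^τ f(t) dt. -/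

import Mathlib

open Matrix MeasureTheory intervalIntegral Filter
open scoped ComplexOrder

attribute [local instance] Matrix.normedAddCommGroup Matrix.normedSpace

/-- Functional-calculus logarithm of a Hermitian matrix (junk value `0` otherwise):
for `A = U diag(eigenvalues) U†` it is `U diag(log eigenvalues) U†`. -/
noncomputable def matLog {n : ℕ} (A : Matrix (Fin n) (Fin n) ℂ) :
    Matrix (Fin n) (Fin n) ℂ :=
  if hA : A.IsHermitian then
    (hA.eigenvectorUnitary : Matrix (Fin n) (Fin n) ℂ) *
      Matrix.diagonal (fun i => (Real.log (hA.eigenvalues i) : ℂ)) *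
      (hA.eigenvectorUnitary : Matrix (Fin n) (Fin n) ℂ)ᴴ
  else 0

/-- Quantum relative entropy `S(ρ‖σ) = Tr[ρ (log ρ - log σ)]`. -/
noncomputable def relEnt {n : ℕ} (ρ σ : Matrix (Fin n) (Fin n) ℂ) : ℝ :=
  ((ρ * (matLog ρ - matLog σ)).trace).re

/-- Von Neumann entropy `S(ρ) = -Tr[ρ log ρ]`. -/
noncomputable def vnEnt {n : ℕ} (ρ : Matrix (Fin n) (Fin n) ℂ) : ℝ :=
  -((ρ * matLog ρ).trace).re

/-- A positive definite density matrix: positive definite with unit trace. -/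
def IsPDDensity {n : ℕ} (ρ : Matrix (Fin n) (Fin n) ℂ) : Prop :=
  ρ.PosDef ∧ ρ.trace = 1

lemma trace_mul_matLog_nonpos {n : ℕ} {ρ σ : Matrix (Fin n) (Fin n) ℂ}
    (hρ : ρ.PosSemidef) (hσ : σ.PosDef) (htr : σ.trace = 1) :
    ((ρ * matLog σ).trace).re ≤ 0 := by
  have hH : σ.IsHermitian := hσ.isHermitian
  set U : Matrix (Fin n) (Fin n) ℂ := (hH.eigenvectorUnitary : Matrix (Fin n) (Fin n) ℂ) with hU
  have hUU : star U * U = 1 := Matrix.mem_unitaryGroup_iff'.mp hH.eigenvectorUnitary.2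
  set lam : Fin n → ℝ := hH.eigenvalues with hlam
  have hsumC : σ.trace = ∑ i, (lam i : ℂ) := by
    conv_lhs => rw [hH.spectral_theorem]
    rw [Unitary.conjStarAlgAut_apply, Matrix.trace_mul_cycle, ← hU, hUU, one_mul, Matrix.trace_diagonal]
    simp [hlam]
  have hsum : ∑ i, lam i = 1 := by
    have : ((∑ i, lam i : ℝ) : ℂ) = 1 := by push_cast; rw [← hsumC, htr]
    exact_mod_cast this
  have hle1 : ∀ i, lam i ≤ 1 := by
    intro i
    calc lam i ≤ ∑ j, lam j := Finset.single_le_sum (fun j _ => (hσ.eigenvalues_pos j).le) (Finset.mem_univ i)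
    _ = 1 := hsum
  set M := Uᴴ * ρ * U with hM
  have hMpsd : M.PosSemidef := hρ.conjTranspose_mul_mul_same U
  have htrace : (ρ * matLog σ).trace = ∑ i, M i i * (Real.log (lam i) : ℂ) := by
    rw [matLog, dif_pos hH]
    simp only [← mul_assoc]
    rw [Matrix.trace_mul_cycle]
    simp only [← mul_assoc]
    simp [Matrix.trace, Matrix.diag, Matrix.mul_diagonal, hM]
    rfl
  rw [htrace, Complex.re_sum]
  apply Finset.sum_nonpos
  intro i _
  have h1 : 0 ≤ M i i := by
    exact hMpsd.diag_nonneg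
  rw [Complex.le_def] at h1
  have h2 : Real.log (lam i) ≤ 0 := Real.log_nonpos (hσ.eigenvalues_pos i).le (hle1 i)
  have h3 : (M i i * (Real.log (lam i) : ℂ)).re = (M i i).re * Real.log (lam i) := by
    simp [Complex.mul_re, ← h1.2]
  rw [h3]
  exact mul_nonpos_of_nonneg_of_nonpos (by simpa using h1.1) h2

lemma relEnt_eq {n : ℕ} (ϱ σ : Matrix (Fin n) (Fin n) ℂ) :
    relEnt ϱ σ = -vnEnt ϱ - ((ϱ * matLog σ).trace).re := by
  simp [relEnt, vnEnt, mul_sub, Matrix.trace_sub, Complex.sub_re]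

/-- `X ↦ Re Tr (X C)` as an `ℝ`-linear map. -/
noncomputable def traceReLM {n : ℕ} (C : Matrix (Fin n) (Fin n) ℂ) :
    Matrix (Fin n) (Fin n) ℂ →ₗ[ℝ] ℝ where
  toFun X := ((X * C).trace).re
  map_add' X Y := by simp [add_mul, Matrix.trace_add]
  map_smul' r X := by
    simp [Matrix.smul_mul, Matrix.trace_smul, Complex.real_smul]


/-- **Corollary 1 of the paper, ΔM + ΔS ≥ 0 case (resource speed limit with total
entropy variation in the numerator).** With `σ₀` the closest free state to `ρ₀`:
if `ΔM + ΔS ≥ 0` then `|ΔM + ΔS| ≤ ∫₀^τ |Tr[ρ̇ₜ log σ₀]| dt`, i.e.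
`τ ≥ T̃_M(ρ₀, ρ_τ)`. -/
theorem resource_speed_limit_of_nonneg
    {n : ℕ} (hn : 1 ≤ n) {τ : ℝ} (hτ : 0 < τ)
    (ρ ρ' : ℝ → Matrix (Fin n) (Fin n) ℂ)
    (hρ : ∀ t ∈ Set.Icc (0 : ℝ) τ, IsPDDensity (ρ t))
    (hderiv : ∀ t ∈ Set.Icc (0 : ℝ) τ, HasDerivAt ρ (ρ' t) t)
    (hcont : ContinuousOn ρ' (Set.Icc (0 : ℝ) τ))
    (F : Set (Matrix (Fin n) (Fin n) ℂ))
    (hFne : F.Nonempty) (hFcpt : IsCompact F) (hF : ∀ σ ∈ F, IsPDDensity σ)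
    (σ₀ : Matrix (Fin n) (Fin n) ℂ) (hσ₀F : σ₀ ∈ F)
    (hσ₀min : ∀ σ ∈ F, relEnt (ρ 0) σ₀ ≤ relEnt (ρ 0) σ)
    (ΔM ΔS : ℝ)
    (hΔM : ΔM = sInf ((fun σ => relEnt (ρ τ) σ) '' F)
              - sInf ((fun σ => relEnt (ρ 0) σ) '' F))
    (hΔS : ΔS = vnEnt (ρ τ) - vnEnt (ρ 0))
    (hpos : 0 ≤ ΔM + ΔS) :
    |ΔM + ΔS| ≤ (∫ t in (0 : ℝ)..τ, |((ρ' t * matLog σ₀).trace).re|) ∧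
    τ ≥ |ΔM + ΔS| / ((1 / τ) * ∫ t in (0 : ℝ)..τ, |((ρ' t * matLog σ₀).trace).re|) := by
  have h0mem : (0 : ℝ) ∈ Set.Icc (0 : ℝ) τ := ⟨le_refl _, hτ.le⟩
  have hτmem : τ ∈ Set.Icc (0 : ℝ) τ := ⟨hτ.le, le_refl _⟩
  set φ : Matrix (Fin n) (Fin n) ℂ →L[ℝ] ℝ :=
    LinearMap.toContinuousLinearMap (traceReLM (matLog σ₀)) with hφ
  have hφdef : ∀ X, φ X = ((X * matLog σ₀).trace).re := fun X => rfl
  set g : ℝ → ℝ := fun t => ((ρ t * matLog σ₀).trace).re with hg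
  -- FTC
  have hkey : ∀ t ∈ Set.uIcc (0 : ℝ) τ, HasDerivAt g (φ (ρ' t)) t := by
    intro t ht
    rw [Set.uIcc_of_le hτ.le] at ht
    exact (φ.hasFDerivAt.comp_hasDerivAt t (hderiv t ht))
  have hcont' : ContinuousOn (fun t => φ (ρ' t)) (Set.uIcc (0 : ℝ) τ) := by
    rw [Set.uIcc_of_le hτ.le]
    exact φ.continuous.comp_continuousOn hcont
  have hint : IntervalIntegrable (fun t => φ (ρ' t)) volume 0 τ :=
    hcont'.intervalIntegrable
  have hFTC : ∫ t in (0:ℝ)..τ, φ (ρ' t) = g τ - g 0 :=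
    intervalIntegral.integral_eq_sub_of_hasDerivAt hkey hint
  set B : ℝ := ∫ t in (0:ℝ)..τ, |((ρ' t * matLog σ₀).trace).re| with hB
  have hBnonneg : 0 ≤ B :=
    intervalIntegral.integral_nonneg hτ.le (fun u _ => abs_nonneg _)
  have habs : |∫ t in (0:ℝ)..τ, φ (ρ' t)| ≤ B :=
    intervalIntegral.abs_integral_le_integral_abs hτ.le
  -- sInf facts
  have hMτ : sInf ((fun σ => relEnt (ρ τ) σ) '' F) ≤ relEnt (ρ τ) σ₀ := by
    apply csInf_le
    · refine ⟨-vnEnt (ρ τ), ?_⟩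
      rintro x ⟨σ, hσF, rfl⟩
      have := trace_mul_matLog_nonpos (hρ τ hτmem).1.posSemidef (hF σ hσF).1 (hF σ hσF).2
      show -vnEnt (ρ τ) ≤ relEnt (ρ τ) σ
      rw [relEnt_eq]
      linarith
    · exact ⟨σ₀, hσ₀F, rfl⟩
  have hM0 : sInf ((fun σ => relEnt (ρ 0) σ) '' F) = relEnt (ρ 0) σ₀ := by
    apply le_antisymm
    · exact csInf_le ⟨relEnt (ρ 0) σ₀, by rintro x ⟨σ, hσF, rfl⟩; exact hσ₀min σ hσF⟩
        ⟨σ₀, hσ₀F, rfl⟩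
    · exact le_csInf (hFne.image _) (by rintro x ⟨σ, hσF, rfl⟩; exact hσ₀min σ hσF)
  -- main bound
  have hmain : ΔM + ΔS ≤ B := by
    have h1 : ΔM + ΔS ≤ g 0 - g τ := by
      rw [hΔM, hΔS, hM0]
      have e1 := relEnt_eq (ρ τ) σ₀
      have e2 := relEnt_eq (ρ 0) σ₀
      have : relEnt (ρ τ) σ₀ + vnEnt (ρ τ) - (relEnt (ρ 0) σ₀ + vnEnt (ρ 0))
          = g 0 - g τ := by rw [e1, e2]; simp [hg]; ring
      linarith
    have h2 : g 0 - g τ ≤ B := by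
      calc g 0 - g τ = -(∫ t in (0:ℝ)..τ, φ (ρ' t)) := by rw [hFTC]; ring
      _ ≤ |∫ t in (0:ℝ)..τ, φ (ρ' t)| := neg_le_abs _
      _ ≤ B := habs
    linarith
  have habs' : |ΔM + ΔS| = ΔM + ΔS := abs_of_nonneg hpos
  constructor
  · rw [habs']; exact hmain
  · rcases eq_or_lt_of_le hBnonneg with h0 | hBpos
    · rw [← h0, mul_zero, div_zero]; exact hτ.le
    · rw [ge_iff_le, div_le_iff₀ (by positivity)]
      calc |ΔM + ΔS| = ΔM + ΔS := habs'
      _ ≤ B := hmain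
      _ = τ * (1 / τ * B) := by field_simp
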